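/- Let α, β > −1 with α + β > 0, let n ≥ 2 and let k be an integer with 1 ≤ k ≤ n−1. Define s_n(k) = (β²−α²)/((2k−2+α+β)(2k+2+α+β)) + (2/(2k+α+β))·[ ((β²−α²)/((2k−2+α+β)(2k+2+α+β)))² + 4k(k+α)(k+β)(k+α+β)/((2k−1+α+β)(2k+1+α+β)) ]^{1/2}, and define g(α,β) = ((β−α)/(β+α))² and h(α,β) = 4n(n+α)(n+β)(n+α+β)/((α+β+1)(α+β+3)). Then: (i) if β ≥ α, s_n(k) ≤ (β−α)/(β+α) + (2/(2+α+β))·√(g(α,β)+h(α,β)); and (ii) if α ≥ β, s_n(k) ≤ (β²−α²)/((β+α+2n)²) + (2/(2+α+β))·√(g(α,β)+h(α,β)). -/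
import Mathlib


open Filter Topology

set_option maxHeartbeats 2000000 in
theorem stmt18 (α β : ℝ) (hα : α > -1) (hβ : β > -1) (hab : α + β > 0)
    (n : ℕ) (hn : 2 ≤ n) (k : ℕ) (hk1 : 1 ≤ k) (hk2 : k ≤ n - 1)
    (snk g h : ℝ)
    (hsnk : snk =
      (β ^ 2 - α ^ 2) / ((2 * (k : ℝ) - 2 + α + β) * (2 * (k : ℝ) + 2 + α + β)) +
      (2 / (2 * (k : ℝ) + α + β)) *
        Real.sqrt (((β ^ 2 - α ^ 2) /
            ((2 * (k : ℝ) - 2 + α + β) * (2 * (k : ℝ) + 2 + α + β))) ^ 2 +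
          4 * (k : ℝ) * ((k : ℝ) + α) * ((k : ℝ) + β) * ((k : ℝ) + α + β) /
            ((2 * (k : ℝ) - 1 + α + β) * (2 * (k : ℝ) + 1 + α + β))))
    (hg : g = ((β - α) / (β + α)) ^ 2)
    (hh : h = 4 * (n : ℝ) * ((n : ℝ) + α) * ((n : ℝ) + β) * ((n : ℝ) + α + β) /
      ((α + β + 1) * (α + β + 3))) :
    (α ≤ β → snk ≤ (β - α) / (β + α) + (2 / (2 + α + β)) * Real.sqrt (g + h)) ∧
    (β ≤ α → snk ≤ (β ^ 2 - α ^ 2) / ((β + α + 2 * (n : ℝ)) ^ 2) +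
      (2 / (2 + α + β)) * Real.sqrt (g + h)) := by
  have hk : (1:ℝ) ≤ (k:ℝ) := by exact_mod_cast hk1
  have hkn' : k + 1 ≤ n := by omega
  have hkn : (k:ℝ) + 1 ≤ (n:ℝ) := by exact_mod_cast hkn'
  have hs0 : (0:ℝ) < α + β := hab
  have hd1 : (0:ℝ) < 2 * (k:ℝ) - 2 + α + β := by nlinarith
  have hd2 : (0:ℝ) < 2 * (k:ℝ) + 2 + α + β := by nlinarith
  have hd3 : (0:ℝ) < 2 * (k:ℝ) - 1 + α + β := by nlinarith
  have hd4 : (0:ℝ) < 2 * (k:ℝ) + 1 + α + β := by nlinarith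
  have hden : (0:ℝ) < 2 * (k:ℝ) + α + β := by nlinarith
  have hD : (0:ℝ) < (2 * (k:ℝ) - 2 + α + β) * (2 * (k:ℝ) + 2 + α + β) := mul_pos hd1 hd2
  have hDge : (α + β)^2 ≤ (2 * (k:ℝ) - 2 + α + β) * (2 * (k:ℝ) + 2 + α + β) := by nlinarith
  -- A^2 ≤ g
  have habs : |(β ^ 2 - α ^ 2) /
      ((2 * (k:ℝ) - 2 + α + β) * (2 * (k:ℝ) + 2 + α + β))| ≤ |(β - α) / (β + α)| := by
    rw [abs_div, abs_div, abs_of_pos hD, abs_of_pos (by linarith : (0:ℝ) < β + α)]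
    rw [div_le_div_iff₀ hD (by linarith : (0:ℝ) < β + α)]
    have hNabs : |β ^ 2 - α ^ 2| = |β - α| * (β + α) := by
      have : β ^ 2 - α ^ 2 = (β - α) * (β + α) := by ring
      rw [this, abs_mul, abs_of_pos (by linarith : (0:ℝ) < β + α)]
    rw [hNabs]
    nlinarith [mul_nonneg (abs_nonneg (β - α)) (sub_nonneg.2 hDge)]
  have hA2 : ((β ^ 2 - α ^ 2) /
      ((2 * (k:ℝ) - 2 + α + β) * (2 * (k:ℝ) + 2 + α + β))) ^ 2 ≤ g := by
    rw [hg, ← sq_abs, ← sq_abs ((β - α) / (β + α))]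
    exact pow_le_pow_left₀ (abs_nonneg _) habs 2
  -- B ≤ h
  have hB : 4 * (k : ℝ) * ((k : ℝ) + α) * ((k : ℝ) + β) * ((k : ℝ) + α + β) /
      ((2 * (k : ℝ) - 1 + α + β) * (2 * (k : ℝ) + 1 + α + β)) ≤ h := by
    rw [hh]
    have hn2 : (2:ℝ) ≤ (n:ℝ) := by exact_mod_cast hn
    have q1 : (0:ℝ) ≤ (n:ℝ) := by linarith
    have q2 : (0:ℝ) ≤ (n:ℝ) + α := by linarith
    have q3 : (0:ℝ) ≤ (n:ℝ) + β := by linarith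
    have q4 : (0:ℝ) ≤ (n:ℝ) + α + β := by linarith
    have hnum : (0:ℝ) ≤ 4 * (n:ℝ) * ((n:ℝ) + α) * ((n:ℝ) + β) * ((n:ℝ) + α + β) :=
      mul_nonneg (mul_nonneg (mul_nonneg (by linarith) q2) q3) q4
    have hden1 : (0:ℝ) < (α + β + 1) * (α + β + 3) := by nlinarith
    have hden2 : (α + β + 1) * (α + β + 3) ≤
        (2 * (k:ℝ) - 1 + α + β) * (2 * (k:ℝ) + 1 + α + β) := by nlinarith
    apply div_le_div₀ hnum _ hden1 hden2
    have h1 : (k:ℝ) ≤ n := by linarith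
    have h2 : (k:ℝ) + α ≤ (n:ℝ) + α := by linarith
    have h3 : (k:ℝ) + β ≤ (n:ℝ) + β := by linarith
    have h4 : (k:ℝ) + α + β ≤ (n:ℝ) + α + β := by linarith
    have p1 : (0:ℝ) ≤ (k:ℝ) := by linarith
    have p2 : (0:ℝ) ≤ (k:ℝ) + α := by linarith
    have p3 : (0:ℝ) ≤ (k:ℝ) + β := by linarith
    have p4 : (0:ℝ) ≤ (k:ℝ) + α + β := by linarith
    nlinarith [mul_le_mul (mul_le_mul (mul_le_mul h1 h2 p2 (by linarith)) h3 p3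
      (by nlinarith)) h4 p4 (by nlinarith)]
  have hgh : (0:ℝ) ≤ g + h := by
    have : ((β ^ 2 - α ^ 2) /
      ((2 * (k:ℝ) - 2 + α + β) * (2 * (k:ℝ) + 2 + α + β))) ^ 2 +
      4 * (k : ℝ) * ((k : ℝ) + α) * ((k : ℝ) + β) * ((k : ℝ) + α + β) /
      ((2 * (k : ℝ) - 1 + α + β) * (2 * (k : ℝ) + 1 + α + β)) ≤ g + h :=
      add_le_add hA2 hB
    have hBnn : (0:ℝ) ≤ 4 * (k : ℝ) * ((k : ℝ) + α) * ((k : ℝ) + β) * ((k : ℝ) + α + β) /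
      ((2 * (k : ℝ) - 1 + α + β) * (2 * (k : ℝ) + 1 + α + β)) := by
      apply div_nonneg (mul_nonneg (mul_nonneg (mul_nonneg
        (by linarith) (by linarith)) (by linarith)) (by linarith)) (by nlinarith)
    nlinarith [sq_nonneg ((β ^ 2 - α ^ 2) /
      ((2 * (k:ℝ) - 2 + α + β) * (2 * (k:ℝ) + 2 + α + β)))]
  -- sqrt bound
  have hsqrt : Real.sqrt (((β ^ 2 - α ^ 2) /
      ((2 * (k:ℝ) - 2 + α + β) * (2 * (k:ℝ) + 2 + α + β))) ^ 2 +
      4 * (k : ℝ) * ((k : ℝ) + α) * ((k : ℝ) + β) * ((k : ℝ) + α + β) /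
      ((2 * (k : ℝ) - 1 + α + β) * (2 * (k : ℝ) + 1 + α + β))) ≤ Real.sqrt (g + h) :=
    Real.sqrt_le_sqrt (add_le_add hA2 hB)
  -- coefficient bound
  have hcoef : 2 / (2 * (k:ℝ) + α + β) ≤ 2 / (2 + α + β) := by
    apply div_le_div_of_nonneg_left (by norm_num) (by linarith) (by linarith)
  have hcoefpos : (0:ℝ) ≤ 2 / (2 * (k:ℝ) + α + β) := by positivity
  have hsecond : (2 / (2 * (k:ℝ) + α + β)) *
      Real.sqrt (((β ^ 2 - α ^ 2) /
      ((2 * (k:ℝ) - 2 + α + β) * (2 * (k:ℝ) + 2 + α + β))) ^ 2 +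
      4 * (k : ℝ) * ((k : ℝ) + α) * ((k : ℝ) + β) * ((k : ℝ) + α + β) /
      ((2 * (k : ℝ) - 1 + α + β) * (2 * (k : ℝ) + 1 + α + β))) ≤
      (2 / (2 + α + β)) * Real.sqrt (g + h) :=
    mul_le_mul hcoef hsqrt (Real.sqrt_nonneg _)
      (le_of_lt (div_pos two_pos (by linarith)))
  constructor
  · intro hab'
    have hfirst : (β ^ 2 - α ^ 2) /
        ((2 * (k:ℝ) - 2 + α + β) * (2 * (k:ℝ) + 2 + α + β)) ≤ (β - α) / (β + α) := by
      rw [div_le_div_iff₀ hD (by linarith)]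
      nlinarith [mul_nonneg (sub_nonneg.2 hab') (sub_nonneg.2 hDge)]
    rw [hsnk]
    exact add_le_add hfirst hsecond
  · intro hab'
    have hfirst : (β ^ 2 - α ^ 2) /
        ((2 * (k:ℝ) - 2 + α + β) * (2 * (k:ℝ) + 2 + α + β)) ≤
        (β ^ 2 - α ^ 2) / ((β + α + 2 * (n:ℝ)) ^ 2) := by
      rw [div_le_div_iff₀ hD (pow_pos (by linarith : (0:ℝ) < β + α + 2 * (n:ℝ)) 2)]
      have hDle : (2 * (k:ℝ) - 2 + α + β) * (2 * (k:ℝ) + 2 + α + β) ≤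
          (β + α + 2 * (n:ℝ)) ^ 2 := by
        nlinarith [mul_nonneg (by linarith : (0:ℝ) ≤ 2*(n:ℝ) - 2*(k:ℝ))
          (by linarith : (0:ℝ) ≤ 2*(n:ℝ) + 2*(k:ℝ) + 2*(α+β))]
      have hN : (0:ℝ) ≤ α ^ 2 - β ^ 2 := by nlinarith
      nlinarith [mul_nonneg hN (sub_nonneg.2 hDle)]
    rw [hsnk]
    exact add_le_add hfirst hsecond
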